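/- The Shrikhande graph is strongly regular with parameters (16, 6, 2, 2): its vertex type has cardinality 16, it is 6-regular, every pair of adjacent vertices has exactly 2 common neighbors, and every pair of distinct non-adjacent vertices has exactly 2 common neighbors. -/

import Mathlib

/-- The connection set of the Shrikhande graph. -/
def shrikhandeSet : Finset (ZMod 4 × ZMod 4) :=
  {(1, 0), (3, 0), (0, 1), (0, 3), (1, 1), (3, 3)}

/-- The Shrikhande graph on `ZMod 4 × ZMod 4`: `u` and `v` are adjacent iff
`u - v` lies in the set {(1,0),(3,0),(0,1),(0,3),(1,1),(3,3)}. -/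
def shrikhandeGraph : SimpleGraph (ZMod 4 × ZMod 4) where
  Adj u v := u - v ∈ shrikhandeSet
  symm := by
    constructor
    intro u v h
    have key : ∀ w : ZMod 4 × ZMod 4, w ∈ shrikhandeSet → -w ∈ shrikhandeSet := by decide
    have := key _ h
    rwa [neg_sub] at this
  loopless := by
    constructor
    intro u h
    beta_reduce at h
    rw [sub_self] at h
    revert h
    decide

instance : DecidableRel shrikhandeGraph.Adj := fun u v =>
  decidable_of_iff (u - v ∈ shrikhandeSet) Iff.rfl

/-- The Shrikhande graph is strongly regular with parameters (16, 6, 2, 2). -/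
theorem shrikhandeGraph_isSRGWith : shrikhandeGraph.IsSRGWith 16 6 2 2 := by
  constructor
  · decide
  · unfold SimpleGraph.IsRegularOfDegree; decide
  · decide
  · unfold Pairwise; decide
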